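/- Let G = (V,E) be a graph, let U, W ⊆ V be nonempty, and let m > 0. If |E(U,W)| ≥ m, then there exists a real number d with m/(2|U|) ≤ d ≤ |W| such that the number of vertices u ∈ U with more than d neighbours in W is at least m/(4·d·log(2|U||W|/m)). -/

import Mathlib

open Finset

variable {V : Type*}

/-- Number of edges of `G` with both endpoints in `S` (i.e. edges of the induced subgraph `G[S]`). -/
noncomputable def edgesIn (G : SimpleGraph V) (S : Finset V) : ℕ :=
  {e ∈ G.edgeSet | ∀ v ∈ e, v ∈ S}.ncard

/-- Number of edges of `G` with one endpoint in `S` and one endpoint in `T`. -/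
noncomputable def edgesBetween (G : SimpleGraph V) (S T : Finset V) : ℕ :=
  {e : Sym2 V | e ∈ G.edgeSet ∧ ∃ u v, e = s(u, v) ∧ u ∈ S ∧ v ∈ T}.ncard

/-- Degree of `v` in the induced subgraph `G[S]`, i.e. `|N(v) ∩ S|`. -/
noncomputable def degIn (G : SimpleGraph V) (S : Finset V) (v : V) : ℕ :=
  ((S : Set V) ∩ G.neighborSet v).ncard

/-- `S_{↑v}`: the vertices of `S` with strictly more neighbours in `S` than `v` has. -/
def upSet (G : SimpleGraph V) (S : Finset V) (v : V) : Set V :=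
  {u | u ∈ S ∧ degIn G S v < degIn G S u}

/-- The maximum removal ratio `MRR_G(J, C)` with parameters `ε, ρ, ℓ`. -/
noncomputable def MRR [DecidableEq V] (G : SimpleGraph V) (ε ρ ℓ : ℝ) (J C : Finset V) : ℝ :=
  sSup {x : ℝ | ∃ v ∈ J, x = max
    ((degIn G (insert v C) v : ℝ) /
      max (degIn G J v : ℝ) (ε / (Real.sqrt ℓ * ρ ^ 2) * J.card))
    (((upSet G C v).ncard : ℝ) /
      max (((upSet G C v) ∩ (J : Set V)).ncard : ℝ) (ε / (Real.sqrt ℓ * ρ ^ 2) * J.card))}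

/-- `G` is `ε`-far from having a `ρn` independent set: every set of `ρn` vertices
spans at least `ε n²` edges. -/
def FarFrom (G : SimpleGraph V) [Fintype V] (ρ ε : ℝ) : Prop :=
  ∀ U : Finset V, (U.card : ℝ) = ρ * Fintype.card V →
    ε * (Fintype.card V : ℝ) ^ 2 ≤ (edgesIn G U : ℝ)

lemma degIn_eq (G : SimpleGraph V) (S : Finset V) (v : V) [DecidableRel G.Adj] :
    degIn G S v = (S.filter (fun w => G.Adj v w)).card := by
  rw [degIn, ← Set.ncard_coe_finset]
  congr 1
  ext w
  simp [SimpleGraph.neighborSet, and_comm]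

lemma degIn_le (G : SimpleGraph V) (S : Finset V) (v : V) : degIn G S v ≤ S.card := by
  classical
  rw [degIn_eq]
  exact Finset.card_filter_le _ _

lemma edgesBetween_le_sum (G : SimpleGraph V) (U W : Finset V) [DecidableRel G.Adj]
    [DecidableEq V] : edgesBetween G U W ≤ ∑ u ∈ U, degIn G W u := by
  have hsub : {e : Sym2 V | e ∈ G.edgeSet ∧ ∃ u v, e = s(u, v) ∧ u ∈ U ∧ v ∈ W} ⊆
      ↑(((U ×ˢ W).filter (fun p => G.Adj p.1 p.2)).image (fun p => s(p.1, p.2))) := by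
    rintro e ⟨he, u, v, rfl, hu, hv⟩
    simp only [Finset.coe_image, Set.mem_image, Finset.mem_coe, Finset.mem_filter,
      Finset.mem_product]
    exact ⟨(u, v), ⟨⟨hu, hv⟩, he⟩, rfl⟩
  calc edgesBetween G U W ≤ (((U ×ˢ W).filter (fun p => G.Adj p.1 p.2)).image
        (fun p : V × V => s(p.1, p.2))).card := by
        rw [edgesBetween, ← Set.ncard_coe_finset]
        exact Set.ncard_le_ncard hsub (Finset.finite_toSet _)
    _ ≤ ((U ×ˢ W).filter (fun p => G.Adj p.1 p.2)).card := Finset.card_image_le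
    _ = ∑ u ∈ U, degIn G W u := by
        rw [Finset.card_eq_sum_card_fiberwise (f := Prod.fst) (t := U)
          (fun p hp => (Finset.mem_product.1 (Finset.mem_filter.1 hp).1).1)]
        refine Finset.sum_congr rfl fun u hu => ?_
        rw [degIn_eq]
        apply Finset.card_nbij' (fun p => p.2) (fun w => (u, w))
        · rintro ⟨a, b⟩ hp
          simp only [Finset.mem_coe, Finset.mem_filter, Finset.mem_product] at hp ⊢
          obtain ⟨⟨⟨ha, hb⟩, hadj⟩, rfl⟩ := hp
          exact ⟨hb, hadj⟩
        · intro w hw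
          simp only [Finset.mem_coe, Finset.mem_filter, Finset.mem_product] at hw ⊢
          exact ⟨⟨⟨hu, hw.1⟩, hw.2⟩, trivial⟩
        · rintro ⟨a, b⟩ hp
          simp only [Finset.mem_coe, Finset.mem_filter] at hp
          simp [← hp.2]
        · intro w hw; rfl

lemma layer_cake [DecidableEq V] (S : Finset V) (g : V → ℕ) (N : ℕ) (h : ∀ u ∈ S, g u ≤ N) :
    ∑ u ∈ S, g u = ∑ t ∈ Finset.range N, (S.filter (fun u => t < g u)).card := by
  have h1 : ∀ u ∈ S, g u = ∑ t ∈ Finset.range N, if t < g u then 1 else 0 := by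
    intro u hu
    rw [← Finset.card_filter]
    have : (Finset.range N).filter (fun t => t < g u) = Finset.range (g u) := by
      ext t
      simp only [Finset.mem_filter, Finset.mem_range]
      have := h u hu
      omega
    rw [this, Finset.card_range]
  rw [Finset.sum_congr rfl h1, Finset.sum_comm]
  refine Finset.sum_congr rfl fun t _ => ?_
  rw [Finset.card_filter]

lemma harm_step {x : ℝ} (hx : 0 < x) : 1/(x+1) ≤ Real.log (x+1) - Real.log x := by
  have h1 : Real.log (x / (x+1)) ≤ x/(x+1) - 1 :=
    Real.log_le_sub_one_of_pos (by positivity)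
  rw [Real.log_div (ne_of_gt hx) (by positivity)] at h1
  have : x/(x+1) - 1 = -(1/(x+1)) := by field_simp; ring
  rw [this] at h1
  linarith

lemma harm (a : ℕ) (ha : 1 ≤ a) : ∀ N, a ≤ N →
    ∑ t ∈ Finset.Ico a N, (1:ℝ)/(t+1) ≤ Real.log N - Real.log a := by
  intro N
  induction N with
  | zero => intro h; omega
  | succ n ih =>
    intro h
    rcases Nat.lt_or_ge a (n+1) with h' | h'
    · have han : a ≤ n := by omega
      rw [Finset.sum_Ico_succ_top han]
      have h2 := harm_step (x := (n:ℝ))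
        (by exact_mod_cast Nat.lt_of_lt_of_le Nat.zero_lt_one (le_trans ha han))
      have := ih han
      push_cast
      push_cast at this h2
      linarith
    · have : a = n + 1 := by omega
      subst this
      simp

lemma arith_final {m L : ℝ} (hm : 0 < m) (hL1 : 1 ≤ L) :
    m / (4 * L) * (1 + L * Real.log 2) < m / 2 := by
  have hlog2 : Real.log 2 < 0.6931471808 := Real.log_two_lt_d9
  have hlog2pos : 0 < Real.log 2 := Real.log_pos one_lt_two
  have hLpos : 0 < L := lt_of_lt_of_le one_pos hL1
  rw [div_mul_eq_mul_div, div_lt_div_iff₀ (by positivity) two_pos]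
  have h1 : m * 1 ≤ m * L := mul_le_mul_of_nonneg_left hL1 hm.le
  have h2 : m * L * Real.log 2 < m * L * 0.6931471808 :=
    mul_lt_mul_of_pos_left hlog2 (mul_pos hm hLpos)
  nlinarith

lemma limit_le {c m L lo hi : ℝ} (hc : 0 ≤ c) (hm : 0 < m) (hL : 0 < L) (hlo : 0 < lo)
    (hlohi : lo < hi) (h : ∀ s, lo ≤ s → s < hi → c < m / (4 * s * L)) :
    c ≤ m / (4 * hi * L) := by
  have hhi0 : 0 < hi := hlo.trans hlohi
  rcases eq_or_lt_of_le hc with hc0 | hc0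
  · rw [← hc0]; positivity
  by_contra hcon
  push_neg at hcon
  set s0 : ℝ := m / (c * 4 * L) with hs0
  have hs0pos : 0 < s0 := by positivity
  have hkey : ∀ s, lo ≤ s → s < hi → s < s0 := by
    intro s hs1 hs2
    have := h s hs1 hs2
    have hspos : 0 < s := lt_of_lt_of_le hlo hs1
    rw [lt_div_iff₀ (by positivity)] at this
    rw [hs0, lt_div_iff₀ (by positivity)]
    nlinarith
  have hhi : hi ≤ s0 := by
    by_contra hh
    push_neg at hh
    have := hkey (max lo s0) (le_max_left _ _) (max_lt hlohi hh)
    exact absurd (le_max_right lo s0) (not_le.2 this)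
  rw [div_lt_iff₀ (by positivity)] at hcon
  rw [hs0, le_div_iff₀ (by positivity)] at hhi
  nlinarith

theorem degree_threshold_existence [Fintype V] (G : SimpleGraph V) (U W : Finset V) (m : ℝ)
    (hU : U.Nonempty) (hW : W.Nonempty) (hm : 0 < m)
    (hE : (edgesBetween G U W : ℝ) ≥ m) :
    ∃ d : ℝ, m / (2 * U.card) ≤ d ∧ d ≤ W.card ∧
      ({u ∈ (U : Set V) | d < (degIn G W u : ℝ)}.ncard : ℝ) ≥
        m / (4 * d * Real.logb 2 (2 * U.card * W.card / m)) := by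
  classical
  set d0 : ℝ := m / (2 * U.card) with hd0def
  set L : ℝ := Real.logb 2 (2 * U.card * W.card / m) with hLdef
  set w : ℕ := W.card with hwdef
  have hU1 : (1:ℝ) ≤ U.card := by exact_mod_cast hU.card_pos
  have hW1 : (1:ℝ) ≤ w := by exact_mod_cast hW.card_pos
  have hd0pos : 0 < d0 := by rw [hd0def]; positivity
  -- m ≤ sum of degrees
  have hsum : m ≤ (∑ u ∈ U, degIn G W u : ℝ) :=
    le_trans hE (by exact_mod_cast edgesBetween_le_sum G U W)
  have hdegle : ∀ u, degIn G W u ≤ w := fun u => degIn_le G W u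
  have hmUW : m ≤ (U.card : ℝ) * w := by
    refine le_trans hsum ?_
    push_cast
    calc (∑ u ∈ U, (degIn G W u : ℝ)) ≤ ∑ _u ∈ U, (w:ℝ) :=
          Finset.sum_le_sum fun u _ => by exact_mod_cast hdegle u
      _ = (U.card : ℝ) * w := by rw [Finset.sum_const, nsmul_eq_mul]
  have hd0W : d0 ≤ (w:ℝ) / 2 := by
    rw [hd0def, div_le_div_iff₀ (by positivity) two_pos]
    have hU0 : (0:ℝ) < U.card := by linarith
    nlinarith
  have hratio : 2 * (U.card:ℝ) * W.card / m = (w:ℝ) / d0 := by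
    rw [hd0def]
    have hU0 : (U.card:ℝ) ≠ 0 := by positivity
    field_simp
    ring
  have hwd0 : (2:ℝ) ≤ (w:ℝ) / d0 := by
    rw [le_div_iff₀ hd0pos]; linarith
  have hL1 : 1 ≤ L := by
    rw [hLdef, hratio, Real.logb, le_div_iff₀ (Real.log_pos one_lt_two)]
    rw [one_mul]
    exact Real.log_le_log two_pos hwd0
  have hLpos : 0 < L := lt_of_lt_of_le one_pos hL1
  have hlogL : Real.log ((w:ℝ) / d0) = L * Real.log 2 := by
    rw [hLdef, hratio, Real.logb, div_mul_cancel₀]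
    exact ne_of_gt (Real.log_pos one_lt_two)
  by_contra hcon
  push_neg at hcon
  -- counting function
  have hF : ∀ d : ℝ, d0 ≤ d → d ≤ (w:ℝ) →
      ((U.filter (fun u => d < (degIn G W u : ℝ))).card : ℝ) < m / (4 * d * L) := by
    intro d h1 h2
    have := hcon d h1 h2
    have heq : {u ∈ (U : Set V) | d < (degIn G W u : ℝ)}.ncard
        = (U.filter (fun u => d < (degIn G W u : ℝ))).card := by
      rw [← Set.ncard_coe_finset]
      congr 1
      ext u
      simp
    rwa [heq] at this
  set S : Finset V := U.filter (fun u => d0 < (degIn G W u : ℝ)) with hSdef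
  -- Step A : m/2 ≤ sum over S
  have hA : m / 2 ≤ (∑ u ∈ S, degIn G W u : ℝ) := by
    have hsplit := Finset.sum_filter_add_sum_filter_not U
      (fun u => d0 < (degIn G W u : ℝ)) (fun u => degIn G W u)
    have hnot : (∑ u ∈ U.filter (fun u => ¬ d0 < (degIn G W u : ℝ)), (degIn G W u : ℝ))
        ≤ (U.card : ℝ) * d0 := by
      calc (∑ u ∈ U.filter (fun u => ¬ d0 < (degIn G W u : ℝ)), (degIn G W u : ℝ))
          ≤ ∑ _u ∈ U.filter (fun u => ¬ d0 < (degIn G W u : ℝ)), d0 :=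
            Finset.sum_le_sum fun u hu => not_lt.1 (Finset.mem_filter.1 hu).2
        _ = ((U.filter (fun u => ¬ d0 < (degIn G W u : ℝ))).card : ℝ) * d0 := by
            rw [Finset.sum_const, nsmul_eq_mul]
        _ ≤ (U.card : ℝ) * d0 := by
            have := Finset.card_filter_le U (fun u => ¬ d0 < (degIn G W u : ℝ))
            have : ((U.filter (fun u => ¬ d0 < (degIn G W u : ℝ))).card : ℝ) ≤ U.card := by
              exact_mod_cast this
            nlinarith
    have hUd0 : (U.card : ℝ) * d0 = m / 2 := by
      rw [hd0def]
      have hU0 : (U.card:ℝ) ≠ 0 := by positivity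
      field_simp
    have hcast : (∑ u ∈ S, (degIn G W u : ℝ)) +
        (∑ u ∈ U.filter (fun u => ¬ d0 < (degIn G W u : ℝ)), (degIn G W u : ℝ))
        = (∑ u ∈ U, (degIn G W u : ℝ)) := by
      exact_mod_cast congrArg (Nat.cast : ℕ → ℝ) hsplit
    linarith
  -- layer cake
  have hB : (∑ u ∈ S, degIn G W u) =
      ∑ t ∈ Finset.range w, (S.filter (fun u => t < degIn G W u)).card :=
    layer_cake S _ w (fun u _ => hdegle u)
  -- a
  set a : ℕ := Nat.floor d0 + 1 with hadef
  have had0 : d0 < (a:ℝ) := by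
    rw [hadef]; push_cast; exact Nat.lt_floor_add_one d0
  have ha1 : 1 ≤ a := Nat.le_add_left 1 _
  have haw : a ≤ w := by
    have : d0 < (w:ℝ) := lt_of_le_of_lt hd0W (by linarith)
    have := (Nat.floor_lt hd0pos.le).2 this
    omega
  -- bound for S.card
  have hScard : (S.card : ℝ) ≤ m / (4 * a * L) := by
    refine limit_le (by positivity) hm hLpos hd0pos had0 ?_
    intro s hs1 hs2
    have hs3 : s ≤ (w:ℝ) := le_trans hs2.le (by exact_mod_cast haw)
    have := hF s hs1 hs3
    have heq : U.filter (fun u => s < (degIn G W u : ℝ)) = S := by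
      rw [hSdef]
      apply Finset.filter_congr
      intro u _
      constructor
      · intro h; exact lt_of_le_of_lt hs1 h
      · intro h
        have : (a:ℝ) ≤ (degIn G W u : ℝ) := by
          have := (Nat.floor_lt hd0pos.le).2 h
          exact_mod_cast this
        linarith
    rwa [heq] at this
  -- bound for middle counts
  have hmid : ∀ t ∈ Finset.Ico a w,
      ((S.filter (fun u => t < degIn G W u)).card : ℝ) ≤ m / (4 * ((t:ℝ)+1) * L) := by
    intro t ht
    obtain ⟨hta, htw⟩ := Finset.mem_Ico.1 ht
    have htd0 : d0 < (t:ℝ) := lt_of_lt_of_le had0 (by exact_mod_cast hta)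
    refine limit_le (by positivity) hm hLpos (lt_trans hd0pos htd0) (by linarith) ?_
    intro s hs1 hs2
    have hs3 : s ≤ (w:ℝ) := by
      have : ((t:ℝ)+1) ≤ (w:ℝ) := by exact_mod_cast htw
      linarith
    have := hF s (by linarith) hs3
    have heq : U.filter (fun u => s < (degIn G W u : ℝ)) =
        S.filter (fun u => t < degIn G W u) := by
      rw [hSdef, Finset.filter_filter]
      apply Finset.filter_congr
      intro u _
      constructor
      · intro h
        have hdeg : (t:ℝ) < (degIn G W u : ℝ) := lt_of_le_of_lt hs1 h
        have : t < degIn G W u := by exact_mod_cast hdeg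
        exact ⟨by linarith [htd0.trans hdeg], this⟩
      · rintro ⟨-, h⟩
        have : ((t:ℝ)+1) ≤ (degIn G W u : ℝ) := by exact_mod_cast h
        linarith
    rwa [heq] at this
  -- combine
  have hsplit2 : (∑ t ∈ Finset.range w, ((S.filter (fun u => t < degIn G W u)).card : ℝ))
      = (∑ t ∈ Finset.range a, ((S.filter (fun u => t < degIn G W u)).card : ℝ))
      + ∑ t ∈ Finset.Ico a w, ((S.filter (fun u => t < degIn G W u)).card : ℝ) := by
    rw [Finset.range_eq_Ico, ← Finset.sum_Ico_consecutive _ (Nat.zero_le a) haw,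
      ← Finset.range_eq_Ico]
  have hfirst : (∑ t ∈ Finset.range a, ((S.filter (fun u => t < degIn G W u)).card : ℝ))
      ≤ m / (4 * L) := by
    have hconst : ∀ t ∈ Finset.range a, (S.filter (fun u => t < degIn G W u)) = S := by
      intro t ht
      rw [Finset.mem_range] at ht
      rw [Finset.filter_eq_self]
      intro u hu
      have := (Finset.mem_filter.1 (hSdef ▸ hu)).2
      have hdeg : a ≤ degIn G W u := by
        have := (Nat.floor_lt hd0pos.le).2 this
        omega
      omega
    calc (∑ t ∈ Finset.range a, ((S.filter (fun u => t < degIn G W u)).card : ℝ))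
        = ∑ _t ∈ Finset.range a, (S.card : ℝ) := by
          refine Finset.sum_congr rfl fun t ht => by rw [hconst t ht]
      _ = (a:ℝ) * S.card := by rw [Finset.sum_const, Finset.card_range, nsmul_eq_mul]
      _ ≤ (a:ℝ) * (m / (4 * a * L)) := by
          have ha0 : (0:ℝ) < a := by exact_mod_cast ha1
          exact mul_le_mul_of_nonneg_left hScard ha0.le
      _ = m / (4 * L) := by
          have ha0 : (a:ℝ) ≠ 0 := by
            have : (0:ℝ) < a := by exact_mod_cast ha1
            exact ne_of_gt this
          field_simp
  have hsecond : (∑ t ∈ Finset.Ico a w, ((S.filter (fun u => t < degIn G W u)).card : ℝ))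
      ≤ m / (4 * L) * (Real.log w - Real.log a) := by
    calc (∑ t ∈ Finset.Ico a w, ((S.filter (fun u => t < degIn G W u)).card : ℝ))
        ≤ ∑ t ∈ Finset.Ico a w, m / (4 * ((t:ℝ)+1) * L) := Finset.sum_le_sum hmid
      _ = ∑ t ∈ Finset.Ico a w, (m / (4 * L)) * (1 / ((t:ℝ)+1)) := by
          refine Finset.sum_congr rfl fun t _ => ?_
          rw [div_mul_div_comm, mul_one]
          ring_nf
      _ = (m / (4 * L)) * ∑ t ∈ Finset.Ico a w, 1 / ((t:ℝ)+1) := by rw [Finset.mul_sum]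
      _ ≤ m / (4 * L) * (Real.log w - Real.log a) := by
          refine mul_le_mul_of_nonneg_left (harm a ha1 w haw) (by positivity)
  have hloga : Real.log d0 ≤ Real.log a := Real.log_le_log hd0pos had0.le
  have hlogw : Real.log ((w:ℝ)) - Real.log d0 = L * Real.log 2 := by
    rw [← hlogL, Real.log_div (by positivity) (ne_of_gt hd0pos)]
  -- final contradiction
  have hfin : (∑ u ∈ S, (degIn G W u : ℝ)) ≤ m / (4 * L) * (1 + L * Real.log 2) := by
    have hcast : (∑ u ∈ S, (degIn G W u : ℝ))
        = ∑ t ∈ Finset.range w, ((S.filter (fun u => t < degIn G W u)).card : ℝ) := by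
      exact_mod_cast congrArg (Nat.cast : ℕ → ℝ) hB
    rw [hcast, hsplit2]
    have : Real.log ((w:ℝ)) - Real.log a ≤ L * Real.log 2 := by
      rw [← hlogw]; linarith
    have h2 : m / (4 * L) * (Real.log w - Real.log a) ≤ m / (4 * L) * (L * Real.log 2) :=
      mul_le_mul_of_nonneg_left this (by positivity)
    calc _ ≤ m / (4*L) + m / (4 * L) * (Real.log w - Real.log a) := by linarith
      _ ≤ m / (4*L) + m / (4 * L) * (L * Real.log 2) := by linarith
      _ = m / (4 * L) * (1 + L * Real.log 2) := by ring
  have hlast : m / (4 * L) * (1 + L * Real.log 2) < m / 2 := arith_final hm hL1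
  linarith
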